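/- Let f be the uniform FIF on SG with vertical scaling factor d = 1/5 determined by f(q_i) = 0 for i = 1,2,3 and f(P_i(q_j)) = 1 for all distinct i, j ∈ {1,2,3}. Then for every p ∈ V_*∖V₀, the limit Δf(p) = lim_{m→∞} (3/2)·5^m·Δ_m f(p) exists and equals −15. Consequently, for any real number α, the function u = −(α/15)·f satisfies u(q_i) = 0 for i = 1,2,3 and Δu(p) = α for all p ∈ V_*∖V₀. -/

import Mathlib

open Finset Filter

noncomputable section

/-- Points in the plane. -/
abbrev Pt := Fin 2 → ℝ

/-- The three contraction maps `P_i(x) = (x + q_i)/2`. -/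
def Pmap (q : Fin 3 → Pt) (i : Fin 3) (x : Pt) : Pt := (x + q i) / 2

/-- `Pw q m ω = P_{ω 0} ∘ P_{ω 1} ∘ ⋯ ∘ P_{ω (m-1)}` for a word `ω` of length `m`. -/
def Pw (q : Fin 3 → Pt) : (m : ℕ) → (Fin m → Fin 3) → Pt → Pt
  | 0, _, x => x
  | m + 1, ω, x => Pmap q (ω 0) (Pw q m (fun k => ω k.succ) x)

/-- The level-`m` vertex set `V_m`. -/
def V (q : Fin 3 → Pt) (m : ℕ) : Set Pt :=
  {x | ∃ ω : Fin m → Fin 3, ∃ i : Fin 3, x = Pw q m ω (q i)}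

/-- `V_* = ⋃ m, V_m`. -/
def Vstar (q : Fin 3 → Pt) : Set Pt := ⋃ m, V q m

/-- The Sierpinski gasket, as the closure of `V_*`. -/
def SG (q : Fin 3 → Pt) : Set Pt := closure (Vstar q)

/-- The level-`m` graph energy. -/
def energy (q : Fin 3 → Pt) (m : ℕ) (u : Pt → ℝ) : ℝ :=
  (5/3 : ℝ)^m * ∑ ω : Fin m → Fin 3,
    ∑ p ∈ Finset.univ.filter (fun p : Fin 3 × Fin 3 => p.1 < p.2),
      (u (Pw q m ω (q p.1)) - u (Pw q m ω (q p.2)))^2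

/-- The level-`m` bilinear graph energy. -/
def energyBil (q : Fin 3 → Pt) (m : ℕ) (u v : Pt → ℝ) : ℝ :=
  (5/3 : ℝ)^m * ∑ ω : Fin m → Fin 3,
    ∑ p ∈ Finset.univ.filter (fun p : Fin 3 × Fin 3 => p.1 < p.2),
      (u (Pw q m ω (q p.1)) - u (Pw q m ω (q p.2))) *
        (v (Pw q m ω (q p.1)) - v (Pw q m ω (q p.2)))

open scoped Classical in
/-- The level-`m` graph Laplacian at `x`. -/
def graphLap (q : Fin 3 → Pt) (m : ℕ) (u : Pt → ℝ) (x : Pt) : ℝ :=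
  ∑ ω : Fin m → Fin 3,
    ∑ p ∈ Finset.univ.filter (fun p : Fin 3 × Fin 3 => p.1 ≠ p.2 ∧ Pw q m ω (q p.1) = x),
      (u (Pw q m ω (q p.2)) - u x)

/-- A function is harmonic on `SG` if it is continuous on `SG` and satisfies
the `1/5-2/5` rule. -/
def IsHarmonic (q : Fin 3 → Pt) (h : Pt → ℝ) : Prop :=
  ContinuousOn h (SG q) ∧
  ∀ (m : ℕ) (ω : Fin m → Fin 3) (i j k : Fin 3), i ≠ j → j ≠ k → i ≠ k →
    h (Pw q m ω (Pmap q i (q j))) =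
      2/5 * h (Pw q m ω (q i)) + 2/5 * h (Pw q m ω (q j)) + 1/5 * h (Pw q m ω (q k))

/-- `f` is a fractal interpolation function on `SG` with vertical scaling factors `d i`. -/
def IsFIF (q : Fin 3 → Pt) (d : Fin 3 → ℝ) (f : Pt → ℝ) : Prop :=
  ContinuousOn f (SG q) ∧
  ∃ h : Fin 3 → Pt → ℝ, (∀ i, IsHarmonic q (h i)) ∧
    ∀ i, ∀ x ∈ SG q, f (Pmap q i x) = d i * f x + h i x


def PwL (q : Fin 3 → Pt) : List (Fin 3) → Pt → Pt
  | [], x => x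
  | a :: l, x => Pmap q a (PwL q l x)

lemma PwL_append (q : Fin 3 → Pt) (l1 l2 : List (Fin 3)) (x : Pt) :
    PwL q (l1 ++ l2) x = PwL q l1 (PwL q l2 x) := by
  induction l1 with
  | nil => rfl
  | cons a t ih => simp [PwL, ih]

lemma Pw_eq (q : Fin 3 → Pt) : ∀ m (ω : Fin m → Fin 3) (x : Pt),
    Pw q m ω x = PwL q (List.ofFn ω) x
  | 0, ω, x => rfl
  | m+1, ω, x => by rw [List.ofFn_succ]; simp [Pw, PwL, Pw_eq q m]

lemma Pmap_self (q : Fin 3 → Pt) (i : Fin 3) : Pmap q i (q i) = q i := by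
  funext t; simp [Pmap]

lemma Pmap_comm (q : Fin 3 → Pt) (i j : Fin 3) : Pmap q i (q j) = Pmap q j (q i) := by
  funext t; simp [Pmap]; ring

lemma two_smul_Pmap (q : Fin 3 → Pt) (i : Fin 3) (x : Pt) :
    (2:ℝ) • Pmap q i x = x + q i := by
  funext t; simp [Pmap]; ring
def D : List (Fin 3) → Fin 3 → Fin 3 → ℕ
  | [], k, c => if k = c then 1 else 0
  | a :: t, k, c => (if a = c then 2^t.length else 0) + D t k c

lemma D_sum (l : List (Fin 3)) (k : Fin 3) : ∑ c, D l k c = 2^l.length := by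
  induction l with
  | nil => simp [D, Finset.sum_ite_eq univ k (fun _ => 1)]
  | cons a t ih =>
      simp only [D, Finset.sum_add_distrib, ih, List.length_cons]
      rw [Finset.sum_ite_eq univ a (fun _ => 2^t.length)]
      simp [pow_succ]; ring

lemma D_le (l : List (Fin 3)) (k c : Fin 3) : D l k c ≤ 2^l.length := by
  induction l with
  | nil => simp [D]; split <;> simp
  | cons a t ih =>
      simp only [D, List.length_cons, pow_succ]
      have : (if a = c then 2^t.length else 0) ≤ 2^t.length := by split <;> simp
      omega

lemma D_eq_max (l : List (Fin 3)) (k c : Fin 3) (h : D l k c = 2^l.length) :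
    l = List.replicate l.length c ∧ k = c := by
  induction l with
  | nil =>
      simp [D] at h
      exact ⟨by simp, h⟩
  | cons a t ih =>
      simp only [D, List.length_cons, pow_succ] at h
      have h1 := D_le t k c
      by_cases hac : a = c
      · rw [if_pos hac] at h
        have : D t k c = 2^t.length := by omega
        obtain ⟨ht, hk⟩ := ih this
        subst hac
        refine ⟨?_, hk⟩
        simp [List.replicate_succ, ← ht]
      · simp only [if_neg hac] at h
        have : 0 < 2^t.length := Nat.pow_pos (by norm_num)
        omega

lemma D_replicate_self (s : ℕ) (j : Fin 3) : D (List.replicate s j) j j = 2^s := by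
  induction s with
  | zero => simp [D]
  | succ n ih => simp [List.replicate_succ, D, ih, pow_succ]; ring

lemma D_replicate_ne (s : ℕ) (j c : Fin 3) (h : c ≠ j) : D (List.replicate s j) j c = 0 := by
  induction s with
  | zero => simp [D, Ne.symm h]
  | succ n ih => simp [List.replicate_succ, D, ih, Ne.symm h]
lemma coordD (q : Fin 3 → Pt) (l : List (Fin 3)) (k : Fin 3) :
    ((2:ℝ)^l.length) • PwL q l (q k) = ∑ c, (D l k c : ℝ) • q c := by
  induction l with
  | nil =>
      simp only [PwL, D, List.length_nil, pow_zero, one_smul]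
      simp only [apply_ite (Nat.cast : ℕ → ℝ), Nat.cast_one, Nat.cast_zero, ite_smul,
        one_smul, zero_smul, Finset.sum_ite_eq, mem_univ, if_true]
  | cons a t ih =>
      rw [List.length_cons, pow_succ, ← smul_smul]
      show ((2:ℝ)^t.length) • ((2:ℝ) • Pmap q a (PwL q t (q k))) = _
      rw [two_smul_Pmap, smul_add, ih]
      have : ∀ c : Fin 3, (D (a::t) k c : ℝ) • q c
          = (D t k c : ℝ) • q c + (if a = c then ((2:ℝ)^t.length) else 0) • q c := by
        intro c
        simp only [D, Nat.cast_add]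
        by_cases h : a = c
        · rw [if_pos h, if_pos h]; push_cast; rw [add_smul]; ring_nf
        · rw [if_neg h, if_neg h]; push_cast; rw [add_smul]; ring_nf
      rw [Finset.sum_congr rfl (fun c _ => this c), Finset.sum_add_distrib]
      simp only [ite_smul, zero_smul, Finset.sum_ite_eq, mem_univ, if_true]

lemma D_eq_of_pt_eq (q : Fin 3 → Pt) (hq : AffineIndependent ℝ q)
    (l l' : List (Fin 3)) (k k' : Fin 3) (hlen : l.length = l'.length)
    (hpt : PwL q l (q k) = PwL q l' (q k')) : ∀ c, D l k c = D l' k' c := by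
  have h1 := coordD q l k
  have h2 := coordD q l' k'
  rw [hpt, hlen, h2] at h1
  have key := hq.eq_of_sum_eq_sum (s := univ) (w₁ := fun c => (D l' k' c : ℝ))
    (w₂ := fun c => (D l k c : ℝ)) ?_ h1
  · intro c
    have h3 : ((D l' k' c : ℝ)) = D l k c := key c (mem_univ c)
    exact_mod_cast h3.symm
  · rw [← Nat.cast_sum, ← Nat.cast_sum, D_sum, D_sum, hlen]
lemma rep_unique (i j : Fin 3) (hij : i ≠ j) (s : ℕ) :
    ∀ (τ l : List (Fin 3)) (k : Fin 3), l.length = τ.length + 1 + s →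
    (∀ c, D l k c = D (τ ++ i :: List.replicate s j) j c) →
    (l = τ ++ i :: List.replicate s j ∧ k = j) ∨
      (l = τ ++ j :: List.replicate s i ∧ k = i) := by
  intro τ
  induction τ with
  | nil =>
      intro l k hlen hD
      match l with
      | [] => simp at hlen; omega
      | a :: t =>
        have ht : t.length = s := by simp at hlen; omega
        simp only [List.nil_append] at hD ⊢
        by_cases hai : a = i
        · subst hai
          have hDt : ∀ c, D t k c = D (List.replicate s j) j c := by
            intro c
            have h0 := hD c
            simp only [D, List.length_replicate, List.append_eq, ht] at h0
            exact Nat.add_left_cancel h0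
          have h1 : D t k j = 2^t.length := by
            rw [hDt j, D_replicate_self, ht]
          obtain ⟨htr, hkj⟩ := D_eq_max t k j h1
          left
          exact ⟨by rw [htr, ht], hkj⟩
        · have h1 := hD a
          have h2 := hD i
          have hia : ¬ (i = a) := fun h => hai h.symm
          simp only [D, List.length_replicate, List.append_eq, ht, hai, hia,
            eq_self_iff_true, if_true, if_false] at h1 h2
          have hle : D (List.replicate s j) j a ≤ 2^s := by
            simpa using D_le (List.replicate s j) j a
          have hD0 : D (List.replicate s j) j a = 2^s := by omega
          obtain ⟨hrep, hja⟩ := D_eq_max (List.replicate s j) j a (by simpa using hD0)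
          have hDrep0 : D (List.replicate s j) j i = 0 := D_replicate_ne s j i hij
          rw [hDrep0] at h2
          have h3 : D t k i = 2^t.length := by rw [ht]; omega
          obtain ⟨htr, hki⟩ := D_eq_max t k i h3
          right
          exact ⟨by rw [← hja, htr, ht], hki⟩
  | cons b τ' ih =>
      intro l k hlen hD
      match l with
      | [] => simp at hlen; omega
      | a :: t =>
        have ht : t.length = (τ' ++ i :: List.replicate s j).length := by
          simp at hlen ⊢; omega
        by_cases hab : a = b
        · subst hab
          have hDt : ∀ c, D t k c = D (τ' ++ i :: List.replicate s j) j c := by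
            intro c
            have h0 := hD c
            simp only [D, List.cons_append, List.append_eq, ht] at h0
            exact Nat.add_left_cancel h0
          have hlen' : t.length = τ'.length + 1 + s := by
            rw [ht]; simp; omega
          rcases ih t k hlen' hDt with ⟨h1, h2⟩ | ⟨h1, h2⟩
          · left; exact ⟨by rw [h1]; rfl, h2⟩
          · right; exact ⟨by rw [h1]; rfl, h2⟩
        · have h1 := hD a
          have hba : ¬ (b = a) := fun h => hab h.symm
          simp only [D, List.cons_append, List.append_eq, ht, hba,
            eq_self_iff_true, if_true, if_false] at h1
          have hle := D_le (τ' ++ i :: List.replicate s j) j a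
          have hmax : D (τ' ++ i :: List.replicate s j) j a
              = 2^(τ' ++ i :: List.replicate s j).length := by omega
          obtain ⟨hrep, hja⟩ := D_eq_max (τ' ++ i :: List.replicate s j) j a hmax
          have hmem : i ∈ τ' ++ i :: List.replicate s j := by simp
          rw [hrep] at hmem
          have hia := List.eq_of_mem_replicate hmem
          exact absurd (hia.trans hja.symm) hij
lemma cons_split {α : Type*} (τ : List α) (a : α) (X : List α) :
    τ ++ (a :: X) = (τ ++ [a]) ++ X := by simp

lemma PwL_replicate_fix (q : Fin 3 → Pt) (j : Fin 3) :
    ∀ s, PwL q (List.replicate s j) (q j) = q j := by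
  intro s
  induction s with
  | zero => rfl
  | succ n ih => rw [List.replicate_succ]; show Pmap q j _ = _; rw [ih, Pmap_self]

lemma PwL_append_fix (q : Fin 3 → Pt) (σ : List (Fin 3)) (j : Fin 3) (s : ℕ) :
    PwL q (σ ++ List.replicate s j) (q j) = PwL q σ (q j) := by
  rw [PwL_append, PwL_replicate_fix]

lemma PwL_append_single (q : Fin 3 → Pt) (σ : List (Fin 3)) (a : Fin 3) (x : Pt) :
    PwL q (σ ++ [a]) x = PwL q σ (Pmap q a x) := by
  rw [PwL_append]; rfl

section Analysis
variable (q : Fin 3 → Pt) (f : Pt → ℝ) (h : Fin 3 → Pt → ℝ)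
variable (hrule : ∀ (a : Fin 3) (σ : List (Fin 3)) (i j k : Fin 3), i ≠ j → j ≠ k → i ≠ k →
  h a (PwL q (σ ++ [i]) (q j)) =
    2/5 * h a (PwL q σ (q i)) + 2/5 * h a (PwL q σ (q j)) + 1/5 * h a (PwL q σ (q k)))
variable (hfr : ∀ (a : Fin 3) (l : List (Fin 3)) (c : Fin 3),
  f (PwL q (a :: l) (q c)) = 1/5 * f (PwL q l (q c)) + h a (PwL q l (q c)))
variable (hval : ∀ a c : Fin 3, h a (q c) = if a = c then 0 else 1)
variable (hb0 : ∀ c : Fin 3, f (q c) = 0)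

include hrule in
lemma HL1 (a : Fin 3) (σ : List (Fin 3)) (x y z : Fin 3)
    (hxy : x ≠ y) (hyz : y ≠ z) (hxz : x ≠ z) (s : ℕ) :
    h a (PwL q (σ ++ List.replicate s y) (q x)) + h a (PwL q (σ ++ List.replicate s y) (q z))
      - 2 * h a (PwL q σ (q y))
    = (3/5)^s * (h a (PwL q σ (q x)) + h a (PwL q σ (q z)) - 2 * h a (PwL q σ (q y))) := by
  induction s with
  | zero => simp
  | succ n ih =>
      rw [List.replicate_succ', ← List.append_assoc]
      rw [hrule a (σ ++ List.replicate n y) y x z hxy.symm hxz hyz]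
      rw [hrule a (σ ++ List.replicate n y) y z x hyz hxz.symm hxy.symm]
      rw [PwL_append_fix]
      linear_combination (3/5 : ℝ) * ih

include hrule in
lemma HY (a : Fin 3) (σ : List (Fin 3)) (i j k : Fin 3)
    (hij : i ≠ j) (hjk : j ≠ k) (hik : i ≠ k) :
    (h a (PwL q (σ ++ [i]) (q i)) + h a (PwL q (σ ++ [i]) (q k)) - 2 * h a (PwL q (σ ++ [i]) (q j)))
    + (h a (PwL q (σ ++ [j]) (q j)) + h a (PwL q (σ ++ [j]) (q k)) - 2 * h a (PwL q (σ ++ [j]) (q i)))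
    = 0 := by
  rw [PwL_append_single q σ i (q i), Pmap_self]
  rw [PwL_append_single q σ j (q j), Pmap_self]
  rw [hrule a σ i k j hik hjk.symm hij]
  rw [hrule a σ i j k hij hjk hik]
  rw [hrule a σ j k i hjk hik.symm hij.symm]
  rw [hrule a σ j i k hij.symm hik hjk]
  ring

include hrule hfr hval hb0 in
lemma PHI (i j k : Fin 3) (hij : i ≠ j) (hjk : j ≠ k) (hik : i ≠ k) (s : ℕ) :
    f (PwL q (List.replicate s j) (q i)) + f (PwL q (List.replicate s j) (q k))
      = 5*(3/5 : ℝ)^s - 5*(1/5 : ℝ)^s := by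
  induction s with
  | zero => show f (q i) + f (q k) = _; rw [hb0, hb0]; norm_num
  | succ n ih =>
      rw [List.replicate_succ, hfr j _ i, hfr j _ k]
      have hA := HL1 q h hrule j ([] : List (Fin 3)) i j k hij hjk hik n
      simp only [List.nil_append, PwL] at hA
      have hA' : h j (PwL q (List.replicate n j) (q i)) + h j (PwL q (List.replicate n j) (q k))
          = 2 * (3/5:ℝ)^n := by
        have h1 : h j (q i) = 1 := by rw [hval]; simp [Ne.symm hij]
        have h2 : h j (q k) = 1 := by rw [hval]; simp [hjk]
        have h3 : h j (q j) = 0 := by rw [hval]; simp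
        rw [h1, h2, h3] at hA
        linear_combination hA
      linear_combination (1/5 : ℝ) * ih + hA'

include hrule hfr hval hb0 in
lemma XBASE (i j k : Fin 3) (hij : i ≠ j) (hjk : j ≠ k) (hik : i ≠ k) (s : ℕ) :
    (f (PwL q (i :: List.replicate s j) (q i)) + f (PwL q (i :: List.replicate s j) (q k))
      - 2 * f (PwL q [i] (q j)))
    + (f (PwL q (j :: List.replicate s i) (q j)) + f (PwL q (j :: List.replicate s i) (q k))
      - 2 * f (PwL q [j] (q i)))
    = -2 * (1/5 : ℝ)^s := by
  rw [hfr i _ i, hfr i _ k, hfr j _ j, hfr j _ k]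
  have e1 : f (PwL q [i] (q j)) = 1 := by
    rw [show ([i] : List (Fin 3)) = i :: [] from rfl, hfr i [] j]
    show 1/5 * f (q j) + h i (q j) = 1
    rw [hb0, hval]; simp [hij]
  have e2 : f (PwL q [j] (q i)) = 1 := by
    rw [show ([j] : List (Fin 3)) = j :: [] from rfl, hfr j [] i]
    show 1/5 * f (q i) + h j (q i) = 1
    rw [hb0, hval]; simp [Ne.symm hij]
  rw [e1, e2]
  have hA := HL1 q h hrule i ([] : List (Fin 3)) i j k hij hjk hik s
  have hB := HL1 q h hrule j ([] : List (Fin 3)) j i k hij.symm hik hjk s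
  simp only [List.nil_append, PwL] at hA hB
  simp only [hval, eq_self_iff_true, if_true, if_pos rfl, if_neg hij, if_neg hik, if_neg hjk,
    if_neg (Ne.symm hij)] at hA hB
  have p1 := PHI q f h hrule hfr hval hb0 i j k hij hjk hik s
  have p2 := PHI q f h hrule hfr hval hb0 j i k hij.symm hik hjk s
  linear_combination (1/5:ℝ) * p1 + (1/5:ℝ) * p2 + hA + hB

include hrule hfr hval hb0 in
lemma XMAIN (i j k : Fin 3) (hij : i ≠ j) (hjk : j ≠ k) (hik : i ≠ k) (s : ℕ) :
    ∀ τ : List (Fin 3),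
    (f (PwL q (τ ++ (i :: List.replicate s j)) (q i))
      + f (PwL q (τ ++ (i :: List.replicate s j)) (q k))
      - 2 * f (PwL q (τ ++ [i]) (q j)))
    + (f (PwL q (τ ++ (j :: List.replicate s i)) (q j))
      + f (PwL q (τ ++ (j :: List.replicate s i)) (q k))
      - 2 * f (PwL q (τ ++ [j]) (q i)))
    = -2 * (1/5 : ℝ)^(τ.length + s) := by
  intro τ
  induction τ with
  | nil =>
      simpa using XBASE q f h hrule hfr hval hb0 i j k hij hjk hik s
  | cons a τ' ih =>
      simp only [List.cons_append, List.length_cons]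
      rw [hfr a _ i, hfr a _ k, hfr a _ j, hfr a _ j, hfr a _ k, hfr a _ i]
      rw [cons_split τ' i (List.replicate s j), cons_split τ' j (List.replicate s i)]
      have e1 := HL1 q h hrule a (τ' ++ [i]) i j k hij hjk hik s
      have e2 := HL1 q h hrule a (τ' ++ [j]) j i k hij.symm hik hjk s
      have e3 := HY q h hrule a τ' i j k hij hjk hik
      rw [cons_split τ' i (List.replicate s j), cons_split τ' j (List.replicate s i)] at ih
      linear_combination (1/5:ℝ) * ih + e1 + e2 + (3/5:ℝ)^s * e3

end Analysis
lemma sum_helper {M : Type*} [Fintype M] [DecidableEq M] (ω0 : M) (j0 : Fin 3) (G : Fin 3 → ℝ) :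
    ∑ ω : M, ∑ pr : Fin 3 × Fin 3,
      (if ω = ω0 ∧ pr.1 = j0 ∧ pr.2 ≠ j0 then G pr.2 else 0)
    = ∑ c ∈ Finset.univ.filter (fun c => c ≠ j0), G c := by
  classical
  have h1 : ∀ ω : M, ∑ pr : Fin 3 × Fin 3,
      (if ω = ω0 ∧ pr.1 = j0 ∧ pr.2 ≠ j0 then G pr.2 else 0)
      = if ω = ω0 then (∑ pr : Fin 3 × Fin 3, if pr.1 = j0 ∧ pr.2 ≠ j0 then G pr.2 else 0)
        else 0 := by
    intro ω
    by_cases hω : ω = ω0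
    · simp [hω]
    · simp [hω]
  rw [Finset.sum_congr rfl (fun ω _ => h1 ω), Finset.sum_ite_eq' Finset.univ ω0]
  simp only [Finset.mem_univ, if_true]
  rw [Fintype.sum_prod_type]
  have h2 : ∀ x : Fin 3, (∑ y : Fin 3, if x = j0 ∧ y ≠ j0 then G y else 0)
      = if x = j0 then (∑ y : Fin 3, if y ≠ j0 then G y else 0) else 0 := by
    intro x
    by_cases hx : x = j0
    · simp [hx]
    · simp [hx]
  rw [Finset.sum_congr rfl (fun x _ => h2 x), Finset.sum_ite_eq' Finset.univ j0]
  simp only [Finset.mem_univ, if_true]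
  rw [Finset.sum_filter]

lemma lap_eval (q : Fin 3 → Pt) (f : Pt → ℝ) (p : Pt) (m : ℕ)
    (ωA ωB : Fin m → Fin 3) (i j : Fin 3) (hij : i ≠ j) (hAB : ωA ≠ ωB)
    (hA : Pw q m ωA (q j) = p) (hB : Pw q m ωB (q i) = p)
    (huniq : ∀ (ω : Fin m → Fin 3) (c : Fin 3), Pw q m ω (q c) = p →
      (ω = ωA ∧ c = j) ∨ (ω = ωB ∧ c = i)) :
    graphLap q m f p =
      (∑ c ∈ Finset.univ.filter (fun c => c ≠ j), (f (Pw q m ωA (q c)) - f p))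
      + (∑ c ∈ Finset.univ.filter (fun c => c ≠ i), (f (Pw q m ωB (q c)) - f p)) := by
  classical
  unfold graphLap
  have key : ∀ (ω : Fin m → Fin 3) (pr : Fin 3 × Fin 3),
      (if pr.1 ≠ pr.2 ∧ Pw q m ω (q pr.1) = p then (f (Pw q m ω (q pr.2)) - f p) else 0)
      = (if ω = ωA ∧ pr.1 = j ∧ pr.2 ≠ j then (f (Pw q m ωA (q pr.2)) - f p) else 0)
        + (if ω = ωB ∧ pr.1 = i ∧ pr.2 ≠ i then (f (Pw q m ωB (q pr.2)) - f p) else 0) := by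
    intro ω pr
    by_cases hc : pr.1 ≠ pr.2 ∧ Pw q m ω (q pr.1) = p
    · rcases huniq ω pr.1 hc.2 with ⟨h1, h2⟩ | ⟨h1, h2⟩
      · have d1 : ω = ωA ∧ pr.1 = j ∧ pr.2 ≠ j := ⟨h1, h2, fun hh => hc.1 (h2.trans hh.symm)⟩
        have d2 : ¬ (ω = ωB ∧ pr.1 = i ∧ pr.2 ≠ i) := by
          rintro ⟨e1, e2, -⟩
          exact hAB (h1.symm.trans e1)
        rw [if_pos hc, if_pos d1, if_neg d2, h1, add_zero]
      · have d2 : ω = ωB ∧ pr.1 = i ∧ pr.2 ≠ i := ⟨h1, h2, fun hh => hc.1 (h2.trans hh.symm)⟩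
        have d1 : ¬ (ω = ωA ∧ pr.1 = j ∧ pr.2 ≠ j) := by
          rintro ⟨e1, e2, -⟩
          exact hAB (e1.symm.trans h1)
        rw [if_pos hc, if_pos d2, if_neg d1, h1, zero_add]
    · have d1 : ¬ (ω = ωA ∧ pr.1 = j ∧ pr.2 ≠ j) := by
        rintro ⟨e1, e2, e3⟩
        exact hc ⟨fun hh => e3 (hh ▸ e2), by rw [e1, e2, hA]⟩
      have d2 : ¬ (ω = ωB ∧ pr.1 = i ∧ pr.2 ≠ i) := by
        rintro ⟨e1, e2, e3⟩
        exact hc ⟨fun hh => e3 (hh ▸ e2), by rw [e1, e2, hB]⟩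
      rw [if_neg hc, if_neg d1, if_neg d2, add_zero]
  calc ∑ ω : Fin m → Fin 3,
      ∑ pr ∈ Finset.univ.filter (fun pr : Fin 3 × Fin 3 => pr.1 ≠ pr.2 ∧ Pw q m ω (q pr.1) = p),
        (f (Pw q m ω (q pr.2)) - f p)
      = ∑ ω : Fin m → Fin 3, ∑ pr : Fin 3 × Fin 3,
          ((if ω = ωA ∧ pr.1 = j ∧ pr.2 ≠ j then (f (Pw q m ωA (q pr.2)) - f p) else 0)
          + (if ω = ωB ∧ pr.1 = i ∧ pr.2 ≠ i then (f (Pw q m ωB (q pr.2)) - f p) else 0)) := by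
        refine Finset.sum_congr rfl (fun ω _ => ?_)
        rw [Finset.sum_filter]
        exact Finset.sum_congr rfl (fun pr _ => key ω pr)
    _ = _ := by
        simp only [Finset.sum_add_distrib]
        rw [sum_helper ωA j (fun c => f (Pw q m ωA (q c)) - f p),
          sum_helper ωB i (fun c => f (Pw q m ωB (q c)) - f p)]

lemma ofFn_get_cast {α : Type*} (l : List α) (m : ℕ) (h : l.length = m) :
    List.ofFn (fun t : Fin m => l.get (Fin.cast h.symm t)) = l := by
  subst h
  exact List.ofFn_get l

def thd (i j : Fin 3) : Fin 3 := ⟨(3 - i.val - j.val) % 3, Nat.mod_lt _ (by norm_num)⟩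

lemma thd_facts : ∀ i j : Fin 3, i ≠ j → (thd i j ≠ i ∧ thd i j ≠ j) := by decide

lemma filt3 : ∀ i j : Fin 3, i ≠ j →
    Finset.univ.filter (fun c => c ≠ j) = ({i, thd i j} : Finset (Fin 3)) := by decide

lemma thd_comm : ∀ i j : Fin 3, i ≠ j → thd j i = thd i j := by decide

lemma normal_form (q : Fin 3 → Pt) (l : List (Fin 3)) :
    ∀ (c : Fin 3), (∀ i, PwL q l (q c) ≠ q i) →
    ∃ (τ : List (Fin 3)) (i j : Fin 3), i ≠ j ∧ PwL q l (q c) = PwL q (τ ++ [i]) (q j) := by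
  induction l using List.reverseRecOn with
  | nil => intro c hc; exact absurd rfl (hc c)
  | append_singleton l a ih =>
      intro c hc
      by_cases hac : a = c
      · subst hac
        have e : PwL q (l ++ [a]) (q a) = PwL q l (q a) := by
          rw [PwL_append_single, Pmap_self]
        rw [e] at hc ⊢
        exact ih a hc
      · exact ⟨l, a, c, hac, rfl⟩


/-- for the uniform FIF `f` with `d = 1/5`, `f(q_i) = 0` and
`f(P_i(q_j)) = 1`, one has `Δf(p) = -15` on `V_* \ V₀`; consequently
`u = -(α/15)f` solves `u(q_i) = 0`, `Δu = α`. -/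
theorem stmt_12 (q : Fin 3 → Pt) (hq : AffineIndependent ℝ q)
    (f : Pt → ℝ) (hf : IsFIF q (fun _ => (1/5 : ℝ)) f)
    (hb : ∀ i : Fin 3, f (q i) = 0)
    (hv : ∀ i j : Fin 3, i ≠ j → f (Pmap q i (q j)) = 1) :
    (∀ p ∈ Vstar q \ V q 0,
      Filter.Tendsto (fun m : ℕ => (3/2 : ℝ) * 5^m * graphLap q m f p)
        Filter.atTop (nhds (-15))) ∧
    (∀ α : ℝ,
      (∀ i : Fin 3, -(α/15) * f (q i) = 0) ∧
      (∀ p ∈ Vstar q \ V q 0,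
        Filter.Tendsto
          (fun m : ℕ => (3/2 : ℝ) * 5^m * graphLap q m (fun x => -(α/15) * f x) p)
          Filter.atTop (nhds α))) := by
  obtain ⟨fcont, h, hharm, hrel⟩ := hf
  have hmem : ∀ (l : List (Fin 3)) (c : Fin 3), PwL q l (q c) ∈ SG q := by
    intro l c
    apply subset_closure
    refine Set.mem_iUnion.2 ⟨l.length, ⟨l.get, c, ?_⟩⟩
    rw [Pw_eq, List.ofFn_get]
  have hfr : ∀ (a : Fin 3) (l : List (Fin 3)) (c : Fin 3),
      f (PwL q (a :: l) (q c)) = 1/5 * f (PwL q l (q c)) + h a (PwL q l (q c)) := by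
    intro a l c
    exact hrel a (PwL q l (q c)) (hmem l c)
  have hval : ∀ a c : Fin 3, h a (q c) = if a = c then 0 else 1 := by
    intro a c
    have h0 := hrel a (q c) (hmem [] c)
    simp only at h0
    rw [hb c] at h0
    by_cases hac : a = c
    · rw [if_pos hac]; subst hac; rw [Pmap_self, hb] at h0; linarith
    · rw [if_neg hac]; rw [hv a c hac] at h0; linarith
  have hrule : ∀ (a : Fin 3) (σ : List (Fin 3)) (i j k : Fin 3), i ≠ j → j ≠ k → i ≠ k →
      h a (PwL q (σ ++ [i]) (q j)) = 2/5 * h a (PwL q σ (q i)) + 2/5 * h a (PwL q σ (q j))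
        + 1/5 * h a (PwL q σ (q k)) := by
    intro a σ i j k hij hjk hik
    have hx := (hharm a).2 σ.length σ.get i j k hij hjk hik
    have e : ∀ y : Pt, Pw q σ.length σ.get y = PwL q σ y := fun y => by
      rw [Pw_eq, List.ofFn_get]
    simp only [e] at hx
    rw [PwL_append_single]
    exact hx
  have key : ∀ p ∈ Vstar q \ V q 0, ∃ n : ℕ, ∀ m ≥ n,
      (3/2 : ℝ) * 5^m * graphLap q m f p = -15 := by
    rintro p ⟨hp, hp0⟩
    have hnq : ∀ c : Fin 3, PwL q (List.ofFn (fun x : Fin 0 => (0 : Fin 3))) (q c) ≠ q c → True :=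
      fun _ _ => trivial
    obtain ⟨m0, hm0⟩ := Set.mem_iUnion.1 hp
    obtain ⟨ω0, c0, hpc⟩ := hm0
    rw [Pw_eq] at hpc
    obtain ⟨τ, i, j, hij, hpnf⟩ := normal_form q (List.ofFn ω0) c0 (by
      intro c hc
      exact hp0 ⟨fun x => x.elim0, c, hpc.trans hc⟩)
    have hp_eq : p = PwL q (τ ++ [i]) (q j) := hpc.trans hpnf
    refine ⟨τ.length + 1, ?_⟩
    intro m hm
    set s := m - (τ.length + 1) with hs
    have hmrs : m = τ.length + 1 + s := by omega
    have hLAlen : (τ ++ (i :: List.replicate s j)).length = m := by simp; omega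
    have hLBlen : (τ ++ (j :: List.replicate s i)).length = m := by simp; omega
    set k := thd i j with hkdef
    obtain ⟨hki, hkj⟩ := thd_facts i j hij
    have hjk : j ≠ k := hkj.symm
    have hik : i ≠ k := hki.symm
    set ωA : Fin m → Fin 3 :=
      fun t => (τ ++ (i :: List.replicate s j)).get (Fin.cast hLAlen.symm t) with hωAdef
    set ωB : Fin m → Fin 3 :=
      fun t => (τ ++ (j :: List.replicate s i)).get (Fin.cast hLBlen.symm t) with hωBdef
    have hωA : List.ofFn ωA = τ ++ (i :: List.replicate s j) :=
      ofFn_get_cast _ m hLAlen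
    have hωB : List.ofFn ωB = τ ++ (j :: List.replicate s i) :=
      ofFn_get_cast _ m hLBlen
    have hPwA : ∀ y : Pt, Pw q m ωA y = PwL q (τ ++ (i :: List.replicate s j)) y := fun y => by
      rw [Pw_eq, hωA]
    have hPwB : ∀ y : Pt, Pw q m ωB y = PwL q (τ ++ (j :: List.replicate s i)) y := fun y => by
      rw [Pw_eq, hωB]
    have hpA : PwL q (τ ++ (i :: List.replicate s j)) (q j) = p := by
      rw [cons_split, PwL_append_fix, ← hp_eq]
    have hpB : PwL q (τ ++ (j :: List.replicate s i)) (q i) = p := by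
      rw [cons_split, PwL_append_fix, PwL_append_single, Pmap_comm, ← PwL_append_single, ← hp_eq]
    have hAB : ωA ≠ ωB := by
      intro hh
      have h1 : τ ++ (i :: List.replicate s j) = τ ++ (j :: List.replicate s i) := by
        rw [← hωA, ← hωB, hh]
      have h2 := List.append_cancel_left h1
      exact hij (by injection h2)
    have huniq : ∀ (ω : Fin m → Fin 3) (c : Fin 3), Pw q m ω (q c) = p →
        (ω = ωA ∧ c = j) ∨ (ω = ωB ∧ c = i) := by
      intro ω c hωc
      rw [Pw_eq] at hωc
      have hlen : (List.ofFn ω).length = (τ ++ (i :: List.replicate s j)).length := by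
        rw [List.length_ofFn, hLAlen]
      have hDs := D_eq_of_pt_eq q hq (List.ofFn ω) (τ ++ (i :: List.replicate s j)) c j hlen
        (by rw [hωc, hpA])
      have hlen2 : (List.ofFn ω).length = τ.length + 1 + s := by
        rw [List.length_ofFn]; omega
      rcases rep_unique i j hij s τ (List.ofFn ω) c hlen2 hDs with ⟨h1, h2⟩ | ⟨h1, h2⟩
      · left
        exact ⟨List.ofFn_inj.1 (h1.trans hωA.symm), h2⟩
      · right
        exact ⟨List.ofFn_inj.1 (h1.trans hωB.symm), h2⟩
    have hlap := lap_eval q f p m ωA ωB i j hij hAB (by rw [hPwA, hpA]) (by rw [hPwB, hpB]) huniq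
    have hsum1 : (∑ c ∈ Finset.univ.filter (fun c => c ≠ j), (f (Pw q m ωA (q c)) - f p))
        = (f (PwL q (τ ++ (i :: List.replicate s j)) (q i)) - f p)
          + (f (PwL q (τ ++ (i :: List.replicate s j)) (q k)) - f p) := by
      rw [filt3 i j hij, ← hkdef, Finset.sum_pair hik, hPwA, hPwA]
    have hsum2 : (∑ c ∈ Finset.univ.filter (fun c => c ≠ i), (f (Pw q m ωB (q c)) - f p))
        = (f (PwL q (τ ++ (j :: List.replicate s i)) (q j)) - f p)
          + (f (PwL q (τ ++ (j :: List.replicate s i)) (q k)) - f p) := by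
      rw [filt3 j i hij.symm, thd_comm i j hij, ← hkdef, Finset.sum_pair hjk, hPwB, hPwB]
    have hX := XMAIN q f h hrule hfr hval hb i j k hij hjk hik s τ
    rw [← hp_eq] at hX
    have e2 : PwL q (τ ++ [j]) (q i) = p := by
      rw [PwL_append_single, Pmap_comm, ← PwL_append_single, ← hp_eq]
    rw [e2] at hX
    have hfinal : graphLap q m f p = -2 * (1/5 : ℝ)^(τ.length + s) := by
      rw [hlap, hsum1, hsum2]
      linear_combination hX
    rw [hfinal, hmrs]
    have hcancel : (5:ℝ)^(τ.length+s) * (1/5 : ℝ)^(τ.length+s) = 1 := by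
      rw [← mul_pow]; norm_num
    calc (3/2:ℝ) * 5^(τ.length+1+s) * (-2 * (1/5 : ℝ)^(τ.length+s))
        = -15 * ((5:ℝ)^(τ.length+s) * (1/5 : ℝ)^(τ.length+s)) := by
          rw [show τ.length+1+s = (τ.length+s)+1 by omega, pow_succ]; ring
      _ = -15 := by rw [hcancel]; ring
  constructor
  · intro p hp
    obtain ⟨n, hn⟩ := key p hp
    refine Filter.Tendsto.congr' ?_ tendsto_const_nhds
    filter_upwards [Filter.eventually_ge_atTop n] with m hm
    exact (hn m hm).symm
  · intro α
    constructor
    · intro i; rw [hb]; ring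
    · intro p hp
      obtain ⟨n, hn⟩ := key p hp
      have hlin : ∀ m : ℕ, graphLap q m (fun x => -(α/15) * f x) p
          = -(α/15) * graphLap q m f p := by
        intro m
        unfold graphLap
        rw [Finset.mul_sum]
        refine Finset.sum_congr rfl fun ω _ => ?_
        rw [Finset.mul_sum]
        exact Finset.sum_congr rfl fun pr _ => by ring
      refine Filter.Tendsto.congr' ?_ tendsto_const_nhds
      filter_upwards [Filter.eventually_ge_atTop n] with m hm
      rw [hlin m]
      linear_combination (α/15 : ℝ) * hn m hm


end
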